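/- arXiv:1410.7807 — 2 statements merged into one kernel-verified Lean document; each statement's English description precedes it below -/
import Mathlib

section
/- One-sided pointwise bound for the Bessel kernel gradient (Lemma 1, inequality (3.9)): For every γ ≥ 0 and every r > 0, the radial profile g_γ(r) = (r²/4) ∫₀^∞ e^{−γs} s^{−2} e^{−r²/(4s)} ds satisfies g_γ(r) ≥ e^{−√γ r}. Equivalently, x · ∇K_γ(x) ≤ −(1/(2π)) e^{−√γ ‖x‖} for all x ≠ 0, where ∇K_γ(x) = −(1/(2π)) (x/‖x‖²) g_γ(‖x‖) and · is the Euclidean inner product on ℝ². -/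
open MeasureTheory Real Set Filter Topology
open scoped ENNReal InnerProductSpace

noncomputable section

/-- The Euclidean plane `ℝ²`. -/
abbrev Plane : Type := EuclideanSpace ℝ (Fin 2)

/-- The radial profile `g_γ(r) = (r²/4) ∫₀^∞ e^{−γ s} s^{−2} e^{−r²/(4s)} ds` of the
gradient of the Bessel kernel of `(−Δ+γ)⁻¹` on `ℝ²`. -/
def besselProfile (γ r : ℝ) : ℝ :=
  (r ^ 2 / 4) * ∫ s in Ioi (0 : ℝ), exp (-γ * s) * s ^ (-2 : ℝ) * exp (-r ^ 2 / (4 * s))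

/-- The gradient of the Bessel kernel expressed through its radial profile:
`∇K_γ(x) = −(1/(2π)) (x/‖x‖²) g_γ(‖x‖)`. -/
def gradKp (γ : ℝ) (x : Plane) : Plane :=
  (-(2 * π)⁻¹ * besselProfile γ ‖x‖ / ‖x‖ ^ 2) • x

lemma rpow_neg_two_eq {s : ℝ} (hs : 0 < s) : s ^ (-2 : ℝ) = (s ^ 2)⁻¹ := by
  rw [show (-2:ℝ) = -((2:ℕ):ℝ) by norm_num, Real.rpow_neg hs.le, Real.rpow_natCast]

lemma exp_neg_le_aux {x : ℝ} (hx : 0 < x) : exp (-x) ≤ 4 / x ^ 2 := by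
  have hsq : exp (x/2) ^ 2 = exp x := by
    rw [pow_two, ← Real.exp_add]; congr 1; ring
  have h := Real.add_one_le_exp (x/2)
  have hp : (x/2 + 1) ^ 2 ≤ exp (x/2) ^ 2 := by
    apply pow_le_pow_left₀ (by positivity) (by linarith)
  have hx2 : x ^ 2 ≤ 4 * exp x := by nlinarith
  have hmul : exp (-x) * exp x = 1 := by rw [← Real.exp_add]; simp
  rw [le_div_iff₀ (by positivity : (0:ℝ) < x ^ 2)]
  nlinarith [exp_pos (-x), exp_pos x]

lemma hasDerivAt_F (r : ℝ) {s : ℝ} (hs : 0 < s) :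
    HasDerivAt (fun t : ℝ => exp (-r ^ 2 / (4 * t)))
      (r ^ 2 / 4 * (s ^ (-2 : ℝ) * exp (-r ^ 2 / (4 * s)))) s := by
  have h1 : HasDerivAt (fun t : ℝ => -r ^ 2 / 4 * t⁻¹) (-r ^ 2 / 4 * -(s ^ 2)⁻¹) s :=
    (hasDerivAt_inv hs.ne').const_mul _
  have h2 := h1.exp
  have he : (fun t : ℝ => exp (-r ^ 2 / 4 * t⁻¹)) = fun t : ℝ => exp (-r ^ 2 / (4 * t)) := by
    funext t; congr 1; ring
  rw [he] at h2
  convert h2 using 1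
  rw [rpow_neg_two_eq hs, show -r ^ 2 / 4 * s⁻¹ = -r ^ 2 / (4 * s) from by ring]
  ring

lemma integrand_nonneg (γ r : ℝ) {s : ℝ} (hs : 0 ≤ s) :
    0 ≤ exp (-γ * s) * s ^ (-2 : ℝ) * exp (-r ^ 2 / (4 * s)) :=
  mul_nonneg (mul_nonneg (exp_pos _).le (Real.rpow_nonneg hs _)) (exp_pos _).le

lemma integrand_integrable (γ r : ℝ) (hγ : 0 ≤ γ) (hr : 0 < r) :
    IntegrableOn (fun s => exp (-γ * s) * s ^ (-2 : ℝ) * exp (-r ^ 2 / (4 * s))) (Ioi (0:ℝ)) := by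
  have hmeas : Measurable (fun s : ℝ => exp (-γ * s) * s ^ (-2 : ℝ) * exp (-r ^ 2 / (4 * s))) := by
    fun_prop
  have hunion : Ioc (0:ℝ) 1 ∪ Ioi 1 = Ioi 0 := Ioc_union_Ioi_eq_Ioi zero_le_one
  rw [← hunion]
  apply IntegrableOn.union
  · apply Integrable.mono' (integrableOn_const (C := (64:ℝ) / r ^ 4) measure_Ioc_lt_top.ne)
      hmeas.aestronglyMeasurable
    filter_upwards [ae_restrict_mem measurableSet_Ioc] with s hs
    obtain ⟨hs0, _⟩ := hs
    have hxpos : 0 < r ^ 2 / (4 * s) := by positivity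
    have key : exp (-(r ^ 2 / (4 * s))) ≤ 4 / (r ^ 2 / (4 * s)) ^ 2 := exp_neg_le_aux hxpos
    have e2 : exp (-r ^ 2 / (4 * s)) ≤ 64 * s ^ 2 / r ^ 4 := by
      rw [show -r ^ 2 / (4 * s) = -(r ^ 2 / (4 * s)) from by ring]
      refine key.trans_eq ?_
      field_simp
      ring
    have e1 : exp (-γ * s) ≤ 1 := exp_le_one_iff.2 (by nlinarith)
    rw [Real.norm_eq_abs, abs_of_nonneg (integrand_nonneg γ r hs0.le)]
    calc exp (-γ * s) * s ^ (-2 : ℝ) * exp (-r ^ 2 / (4 * s))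
        ≤ 1 * s ^ (-2 : ℝ) * (64 * s ^ 2 / r ^ 4) := by
          apply mul_le_mul (mul_le_mul_of_nonneg_right e1 (by positivity)) e2 (exp_pos _).le
          positivity
      _ = 64 / r ^ 4 := by
          rw [one_mul, rpow_neg_two_eq hs0]; field_simp
  · apply Integrable.mono' (integrableOn_Ioi_rpow_of_lt (by norm_num : (-2:ℝ) < -1) one_pos)
      hmeas.aestronglyMeasurable
    filter_upwards [ae_restrict_mem measurableSet_Ioi] with s hs
    have hs0 : (0:ℝ) < s := lt_trans one_pos hs
    rw [Real.norm_eq_abs, abs_of_nonneg (integrand_nonneg γ r hs0.le)]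
    have hd : -r ^ 2 / (4 * s) ≤ 0 :=
      div_nonpos_of_nonpos_of_nonneg (neg_nonpos.2 (sq_nonneg r)) (by positivity)
    calc exp (-γ * s) * s ^ (-2 : ℝ) * exp (-r ^ 2 / (4 * s))
        ≤ 1 * s ^ (-2 : ℝ) * 1 := by
          apply mul_le_mul (mul_le_mul_of_nonneg_right
            (exp_le_one_iff.2 (by nlinarith)) (by positivity))
            (exp_le_one_iff.2 hd) (exp_pos _).le (by positivity)
      _ = s ^ (-2 : ℝ) := by ring

lemma contOn_g (r : ℝ) {a b : ℝ} (ha : 0 < a) :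
    ContinuousOn (fun s : ℝ => s ^ (-2 : ℝ) * exp (-r ^ 2 / (4 * s))) (Icc a b) := by
  apply ContinuousOn.mul
  · intro s hs
    exact (Real.continuousAt_rpow_const s _ (Or.inl (lt_of_lt_of_le ha hs.1).ne')).continuousWithinAt
  · apply Real.continuous_exp.comp_continuousOn
    apply ContinuousOn.div continuousOn_const (by fun_prop)
    intro s hs
    have : 0 < s := lt_of_lt_of_le ha hs.1
    positivity

lemma bessel_ge (γ r T : ℝ) (hγ : 0 ≤ γ) (hr : 0 < r) (hT : 0 < T) :
    exp (-(γ * T + r ^ 2 / (4 * T))) ≤ besselProfile γ r := by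
  set f : ℝ → ℝ := fun s => exp (-γ * s) * s ^ (-2 : ℝ) * exp (-r ^ 2 / (4 * s)) with hf
  have hint := integrand_integrable γ r hγ hr
  have step : ∀ ε ∈ Ioo (0:ℝ) T,
      exp (-γ * T) * (exp (-r ^ 2 / (4 * T)) - exp (-r ^ 2 / (4 * ε))) ≤ besselProfile γ r := by
    intro ε hε
    obtain ⟨hε0, hεT⟩ := hε
    have hftc : ∫ s in Ioc ε T, r ^ 2 / 4 * (s ^ (-2 : ℝ) * exp (-r ^ 2 / (4 * s)))
        = exp (-r ^ 2 / (4 * T)) - exp (-r ^ 2 / (4 * ε)) := by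
      rw [← intervalIntegral.integral_of_le hεT.le]
      apply intervalIntegral.integral_eq_sub_of_hasDerivAt
      · intro s hs
        rw [uIcc_of_le hεT.le] at hs
        exact hasDerivAt_F r (lt_of_lt_of_le hε0 hs.1)
      · apply ContinuousOn.intervalIntegrable
        rw [uIcc_of_le hεT.le]
        exact continuousOn_const.mul (contOn_g r hε0)
    -- integrability on Ioc ε T
    have hfI : IntegrableOn f (Ioc ε T) :=
      hint.mono_set (fun s hs => lt_trans hε0 hs.1)
    have hgI : IntegrableOn (fun s : ℝ => exp (-γ * T) * (r ^ 2 / 4 *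
        (s ^ (-2 : ℝ) * exp (-r ^ 2 / (4 * s))))) (Ioc ε T) :=
      ((continuousOn_const.mul (continuousOn_const.mul
        (contOn_g r hε0))).integrableOn_Icc).mono_set Ioc_subset_Icc_self
    have hmono1 : exp (-γ * T) * (exp (-r ^ 2 / (4 * T)) - exp (-r ^ 2 / (4 * ε)))
        ≤ r ^ 2 / 4 * ∫ s in Ioc ε T, f s := by
      rw [← hftc, ← integral_const_mul, ← integral_const_mul]
      apply setIntegral_mono_on hgI (hfI.const_mul _) measurableSet_Ioc
      intro s hs
      have hs0 : 0 < s := lt_trans hε0 hs.1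
      have hexp : exp (-γ * T) ≤ exp (-γ * s) := by
        apply exp_le_exp.2
        nlinarith [hs.2]
      calc exp (-γ * T) * (r ^ 2 / 4 * (s ^ (-2 : ℝ) * exp (-r ^ 2 / (4 * s))))
          ≤ exp (-γ * s) * (r ^ 2 / 4 * (s ^ (-2 : ℝ) * exp (-r ^ 2 / (4 * s)))) := by
            apply mul_le_mul_of_nonneg_right hexp (by positivity)
        _ = r ^ 2 / 4 * f s := by rw [hf]; ring
    have hmono2 : ∫ s in Ioc ε T, f s ≤ ∫ s in Ioi (0:ℝ), f s := by
      apply setIntegral_mono_set hint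
      · filter_upwards [ae_restrict_mem measurableSet_Ioi] with s hs using
          integrand_nonneg γ r (le_of_lt hs)
      · exact HasSubset.Subset.eventuallyLE (fun s hs => lt_trans hε0 hs.1)
    calc exp (-γ * T) * (exp (-r ^ 2 / (4 * T)) - exp (-r ^ 2 / (4 * ε)))
        ≤ r ^ 2 / 4 * ∫ s in Ioc ε T, f s := hmono1
      _ ≤ r ^ 2 / 4 * ∫ s in Ioi (0:ℝ), f s := by
          apply mul_le_mul_of_nonneg_left hmono2 (by positivity)
      _ = besselProfile γ r := rfl
  -- limit ε → 0⁺
  have hlim : Tendsto (fun ε : ℝ => exp (-γ * T) * (exp (-r ^ 2 / (4 * T)) - exp (-r ^ 2 / (4 * ε))))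
      (𝓝[>] (0:ℝ)) (𝓝 (exp (-(γ * T + r ^ 2 / (4 * T))))) := by
    have h1 : Tendsto (fun ε : ℝ => -r ^ 2 / (4 * ε)) (𝓝[>] (0:ℝ)) atBot := by
      have h2 : Tendsto (fun ε : ℝ => r ^ 2 / 4 * ε⁻¹) (𝓝[>] (0:ℝ)) atTop :=
        tendsto_inv_nhdsGT_zero.const_mul_atTop (by positivity)
      have h3 : Tendsto (fun ε : ℝ => -(r ^ 2 / 4 * ε⁻¹)) (𝓝[>] (0:ℝ)) atBot :=
        tendsto_neg_atTop_atBot.comp h2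
      convert h3 using 1
      funext ε; ring
    have h5 : Tendsto (fun ε : ℝ => exp (-r ^ 2 / (4 * ε))) (𝓝[>] (0:ℝ)) (𝓝 0) :=
      Real.tendsto_exp_atBot.comp h1
    have h4 : Tendsto (fun ε : ℝ =>
        exp (-γ * T) * (exp (-r ^ 2 / (4 * T)) - exp (-r ^ 2 / (4 * ε)))) (𝓝[>] (0:ℝ))
        (𝓝 (exp (-γ * T) * (exp (-r ^ 2 / (4 * T)) - 0))) :=
      ((tendsto_const_nhds (x := exp (-r ^ 2 / (4 * T)))).sub h5).const_mul _
    convert h4 using 2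
    rw [sub_zero, ← Real.exp_add]
    ring_nf
  apply le_of_tendsto hlim
  filter_upwards [Ioo_mem_nhdsGT_of_mem (left_mem_Ico.2 hT)] with ε hε using step ε hε

/-- **One-sided pointwise bound for the Bessel kernel gradient** (Lemma 1, (3.9)).
For every `γ ≥ 0` and `r > 0`, `g_γ(r) ≥ e^{−√γ r}`; equivalently
`x · ∇K_γ(x) ≤ −(1/(2π)) e^{−√γ ‖x‖}` for all `x ≠ 0`. -/
theorem besselProfile_lower_bound (γ : ℝ) (hγ : 0 ≤ γ) :
    (∀ r : ℝ, 0 < r → exp (-Real.sqrt γ * r) ≤ besselProfile γ r) ∧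
    (∀ x : Plane, x ≠ 0 → ⟪x, gradKp γ x⟫_ℝ ≤ -(2 * π)⁻¹ * exp (-Real.sqrt γ * ‖x‖)) := by
  have key : ∀ r : ℝ, 0 < r → exp (-Real.sqrt γ * r) ≤ besselProfile γ r := by
    intro r hr
    rcases eq_or_lt_of_le hγ with h0 | hpos
    · -- γ = 0
      have h0' : γ = 0 := h0.symm
      subst h0'
      have hlim : Tendsto (fun T : ℝ => exp (-(0 * T + r ^ 2 / (4 * T)))) atTop
          (𝓝 (exp (-Real.sqrt 0 * r))) := by
        have h1 : Tendsto (fun T : ℝ => -(0 * T + r ^ 2 / (4 * T))) atTop (𝓝 0) := by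
          have h2 : (fun T : ℝ => -(0 * T + r ^ 2 / (4 * T))) = fun T : ℝ => -(r ^ 2 / 4) * T⁻¹ := by
            funext T; ring
          have h3 : Tendsto (fun T : ℝ => -(r ^ 2 / 4) * T⁻¹) atTop (𝓝 (-(r ^ 2 / 4) * 0)) :=
            tendsto_inv_atTop_zero.const_mul _
          rw [h2, show (0:ℝ) = -(r ^ 2 / 4) * 0 from by ring]
          exact h3
        have := (Real.continuous_exp.tendsto 0).comp h1
        simpa [Function.comp_def] using this
      apply le_of_tendsto hlim
      filter_upwards [eventually_gt_atTop (0:ℝ)] with T hT using bessel_ge 0 r T le_rfl hr hT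
    · -- γ > 0
      have hsγ : 0 < Real.sqrt γ := Real.sqrt_pos.2 hpos
      have hT : 0 < r / (2 * Real.sqrt γ) := by positivity
      have hb := bessel_ge γ r (r / (2 * Real.sqrt γ)) hγ hr hT
      have heq : γ * (r / (2 * Real.sqrt γ)) + r ^ 2 / (4 * (r / (2 * Real.sqrt γ)))
          = Real.sqrt γ * r := by
        have hγeq : Real.sqrt γ * Real.sqrt γ = γ := Real.mul_self_sqrt hγ
        field_simp
        nlinarith [hγeq, hsγ, hr]
      rw [heq] at hb
      simpa [neg_mul] using hb
  refine ⟨key, ?_⟩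
  intro x hx
  have hnx : 0 < ‖x‖ := norm_pos_iff.2 hx
  have h1 : ⟪x, gradKp γ x⟫_ℝ = -(2 * π)⁻¹ * besselProfile γ ‖x‖ := by
    rw [gradKp, real_inner_smul_right, real_inner_self_eq_norm_sq]
    field_simp
  rw [h1]
  have hπ : 0 < (2 * π)⁻¹ := by
    have := Real.pi_pos; positivity
  rw [neg_mul, neg_mul, neg_le_neg_iff]
  exact mul_le_mul_of_nonneg_left (key ‖x‖ hnx) hπ.le
end
end

section
/- Monotonicity of the Bessel kernel radial profile (Lemma 7, profile property): For every γ ≥ 0, the function r ↦ g_γ(r) = (r²/4) ∫₀^∞ e^{−γs} s^{−2} e^{−r²/(4s)} ds is antitone (monotone nonincreasing) on (0,∞), and 0 ≤ g_γ(r) ≤ 1 for all r > 0. -/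
open MeasureTheory Real Set
open scoped ENNReal InnerProductSpace

noncomputable section

/-- The rescaled integrand `u ↦ e^{-u} e^{-θ/u}` is integrable on `(0,∞)` for `θ ≥ 0`. -/
lemma besselAux_integrable (θ : ℝ) (hθ : 0 ≤ θ) :
    IntegrableOn (fun u : ℝ => exp (-u) * exp (-θ / u)) (Ioi 0) := by
  have hmeas : Measurable (fun u : ℝ => exp (-u) * exp (-θ / u)) := by fun_prop
  have hbase : IntegrableOn (fun u : ℝ => exp (-1 * u)) (Ioi 0) :=
    exp_neg_integrableOn_Ioi 0 one_pos
  refine Integrable.mono hbase hmeas.aestronglyMeasurable ?_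
  filter_upwards [ae_restrict_mem measurableSet_Ioi] with u hu
  rw [norm_eq_abs, norm_eq_abs, abs_of_nonneg (by positivity),
    abs_of_nonneg (exp_pos _).le, neg_one_mul]
  have h1 : exp (-θ / u) ≤ 1 := by
    rw [exp_le_one_iff]
    have : 0 ≤ θ / u := div_nonneg hθ (le_of_lt hu)
    rw [neg_div]; linarith
  calc exp (-u) * exp (-θ / u) ≤ exp (-u) * 1 := by gcongr
    _ = exp (-u) := mul_one _

/-- Change of variables `s = r²/(4u)`: the profile as a single exponential integral. -/
lemma besselProfile_eq (γ : ℝ) {r : ℝ} (hr : 0 < r) :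
    besselProfile γ r = ∫ u in Ioi (0 : ℝ), exp (-u) * exp (-(γ * r ^ 2 / 4) / u) := by
  set c : ℝ := r ^ 2 / 4 with hc
  have hc0 : 0 < c := by positivity
  set f : ℝ → ℝ := fun x => exp (-γ / x) * exp (-c * x) with hf
  have step1 : (∫ s in Ioi (0 : ℝ), exp (-γ * s) * s ^ (-2 : ℝ) * exp (-r ^ 2 / (4 * s)))
      = ∫ y in Ioi (0 : ℝ), f y := by
    rw [← integral_comp_rpow_Ioi f (p := -1) (by norm_num)]
    refine setIntegral_congr_fun measurableSet_Ioi fun x hx => ?_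
    have hx0 : (0 : ℝ) < x := hx
    have hxinv : x ^ (-1 : ℝ) = x⁻¹ := rpow_neg_one x
    simp only [hf, hxinv, smul_eq_mul, abs_neg, abs_one]
    have h1 : -γ / x⁻¹ = -γ * x := by field_simp
    have h2 : -c * x⁻¹ = -r ^ 2 / (4 * x) := by rw [hc]; field_simp
    rw [h1, h2]
    norm_num
    ring
  have key := integral_comp_mul_left_Ioi
      (fun u => exp (-u) * exp (-(γ * c) / u)) 0 hc0
  simp only [mul_zero, smul_eq_mul] at key
  have step2 : (∫ y in Ioi (0 : ℝ), f y)
      = c⁻¹ * ∫ u in Ioi (0 : ℝ), exp (-u) * exp (-(γ * c) / u) := by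
    rw [← key]
    refine setIntegral_congr_fun measurableSet_Ioi fun y hy => ?_
    have hy0 : (0 : ℝ) < y := hy
    show exp (-γ / y) * exp (-c * y) = exp (-(c * y)) * exp (-(γ * c) / (c * y))
    rw [mul_comm]
    congr 2
    · ring
    · field_simp
  rw [besselProfile, mul_div_assoc, ← hc, step1, step2, ← mul_assoc,
    mul_inv_cancel₀ hc0.ne', one_mul]

/-- **Monotonicity of the Bessel kernel radial profile** (Lemma 7, profile property).
For every `γ ≥ 0` the profile `g_γ` is nonincreasing on `(0,∞)` and takes values in
`[0,1]` there. -/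
theorem besselProfile_antitone_and_bounded (γ : ℝ) (hγ : 0 ≤ γ) :
    AntitoneOn (fun r => besselProfile γ r) (Ioi 0) ∧
    (∀ r : ℝ, 0 < r → 0 ≤ besselProfile γ r ∧ besselProfile γ r ≤ 1) := by
  have hexp : IntegrableOn (fun x : ℝ => exp (-x)) (Ioi 0) := by
    simpa using exp_neg_integrableOn_Ioi 0 one_pos
  constructor
  · intro a ha b hb hab
    have ha0 : (0 : ℝ) < a := ha
    have hb0 : (0 : ℝ) < b := hb
    simp only [besselProfile_eq γ ha0, besselProfile_eq γ hb0]
    refine setIntegral_mono_on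
      (besselAux_integrable _ (by positivity)) (besselAux_integrable _ (by positivity))
      measurableSet_Ioi fun u hu => ?_
    have hu0 : (0 : ℝ) < u := hu
    have hθ : γ * a ^ 2 / 4 / u ≤ γ * b ^ 2 / 4 / u := by
      gcongr
    exact mul_le_mul_of_nonneg_left
      (exp_le_exp.mpr (by rw [neg_div, neg_div]; exact neg_le_neg hθ)) (exp_pos _).le
  · intro r hr
    rw [besselProfile_eq γ hr]
    constructor
    · refine setIntegral_nonneg measurableSet_Ioi fun u _ => ?_
      positivity
    · rw [← integral_exp_neg_Ioi_zero]
      refine setIntegral_mono_on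
        (besselAux_integrable _ (by positivity)) hexp measurableSet_Ioi fun u hu => ?_
      have hu0 : (0 : ℝ) < u := hu
      have h1 : exp (-(γ * r ^ 2 / 4) / u) ≤ 1 := by
        rw [exp_le_one_iff]
        have : 0 ≤ (γ * r ^ 2 / 4) / u := by positivity
        rw [neg_div]; linarith
      calc exp (-u) * exp (-(γ * r ^ 2 / 4) / u) ≤ exp (-u) * 1 := by gcongr
        _ = exp (-u) := mul_one _
end
end
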